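/- arXiv:2410.05700 — 4 statements merged into one kernel-verified Lean document; each statement's English description precedes it below -/
import Mathlib

section
/- Let H : K -> R^{d x d} be a self-concordant matrix function satisfying (1 - ||u-v||_{H(u)})^2 H(v) <= H(u) <= (1 + ||u-v||_{H(u)})^2 H(v) for all u,v with ||u-v||_{H(u)} <= 1. Define Phi(u) = alpha^{-1} H(u) + eta^{-1} I_d for alpha in (0,1), eta > 0. Then for any u, v in K with ||u-v||_{Phi(u)} <= alpha^{-1/2}, we have (1 - alpha^{1/2} ||u-v||_{Phi(u)})^2 Phi(v) <= Phi(u) <= (1 + alpha^{1/2} ||u-v||_{Phi(u)})^2 Phi(v). -/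
open Matrix

/-- Local norm induced by a matrix: `‖w‖_M = √(wᵀ M w)`. -/
private lemma hermSmul {d : ℕ} (c : ℝ) {A : Matrix (Fin d) (Fin d) ℝ}
    (h : A.IsHermitian) : (c • A).IsHermitian := by
  unfold Matrix.IsHermitian at *
  rw [Matrix.conjTranspose_smul, star_trivial, h]

private lemma dotSelfNonneg {d : ℕ} (x : Fin d → ℝ) : 0 ≤ x ⬝ᵥ x := by
  simpa using dotProduct_star_self_nonneg x

noncomputable def matNorm {d : ℕ} (M : Matrix (Fin d) (Fin d) ℝ) (w : Fin d → ℝ) : ℝ :=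
  Real.sqrt (w ⬝ᵥ M.mulVec w)

/-- Local PSD approximation for a regularized self-concordant matrix function:
if `H` is self-concordant on `K` and `Φ(u) = α⁻¹ H(u) + η⁻¹ I`, then for
`u, v ∈ K` with `‖u - v‖_{Φ(u)} ≤ 1/√α`,
`(1 - √α ‖u-v‖_{Φ(u)})² Φ(v) ⪯ Φ(u) ⪯ (1 + √α ‖u-v‖_{Φ(u)})² Φ(v)`. -/
theorem regularized_local_psd_approx {d : ℕ} (K : Set (Fin d → ℝ)) (hK : Convex ℝ K)
    (H : (Fin d → ℝ) → Matrix (Fin d) (Fin d) ℝ)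
    (hPD : ∀ x ∈ K, (H x).PosDef)
    (hsc : ∀ u ∈ K, ∀ v ∈ K, matNorm (H u) (u - v) ≤ 1 →
      ((H u) - (1 - matNorm (H u) (u - v)) ^ 2 • (H v)).PosSemidef ∧
      ((1 + matNorm (H u) (u - v)) ^ 2 • (H v) - H u).PosSemidef)
    (α η : ℝ) (hα : α ∈ Set.Ioo (0 : ℝ) 1) (hη : 0 < η)
    (Φ : (Fin d → ℝ) → Matrix (Fin d) (Fin d) ℝ)
    (hΦ : ∀ u, Φ u = α⁻¹ • H u + η⁻¹ • (1 : Matrix (Fin d) (Fin d) ℝ))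
    (u v : Fin d → ℝ) (hu : u ∈ K) (hv : v ∈ K)
    (hclose : matNorm (Φ u) (u - v) ≤ 1 / Real.sqrt α) :
    ((Φ u) - (1 - Real.sqrt α * matNorm (Φ u) (u - v)) ^ 2 • (Φ v)).PosSemidef ∧
    ((1 + Real.sqrt α * matNorm (Φ u) (u - v)) ^ 2 • (Φ v) - Φ u).PosSemidef := by
  obtain ⟨hα0, hα1⟩ := hα
  have hαinv : (0:ℝ) ≤ α⁻¹ := le_of_lt (inv_pos.mpr hα0)
  have hηinv : (0:ℝ) ≤ η⁻¹ := le_of_lt (inv_pos.mpr hη)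
  have hsqα : 0 < Real.sqrt α := Real.sqrt_pos.mpr hα0
  set r := matNorm (Φ u) (u - v) with hrdef
  set t := matNorm (H u) (u - v) with htdef
  have hr0 : 0 ≤ r := Real.sqrt_nonneg _
  have ht0 : 0 ≤ t := Real.sqrt_nonneg _
  -- quadratic form of Φ
  have hqΦ : ∀ w x : Fin d → ℝ,
      x ⬝ᵥ (Φ w).mulVec x = α⁻¹ * (x ⬝ᵥ (H w).mulVec x) + η⁻¹ * (x ⬝ᵥ x) := by
    intro w x
    simp [hΦ, Matrix.add_mulVec, Matrix.smul_mulVec, Matrix.one_mulVec,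
      dotProduct_add, dotProduct_smul, smul_eq_mul]
  have hqHu : ∀ x : Fin d → ℝ, 0 ≤ x ⬝ᵥ (H u).mulVec x := fun x => by
    simpa using (hPD u hu).posSemidef.dotProduct_mulVec_nonneg x
  have hqHv : ∀ x : Fin d → ℝ, 0 ≤ x ⬝ᵥ (H v).mulVec x := fun x => by
    simpa using (hPD v hv).posSemidef.dotProduct_mulVec_nonneg x
  have hdd : 0 ≤ (u - v) ⬝ᵥ (u - v) := dotSelfNonneg _
  -- s = √α * r, and t ≤ s
  set s := Real.sqrt α * r with hsdef
  have hs0 : 0 ≤ s := mul_nonneg hsqα.le hr0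
  have hs1 : s ≤ 1 := by
    have := mul_le_mul_of_nonneg_left hclose hsqα.le
    calc s ≤ Real.sqrt α * (1 / Real.sqrt α) := mul_le_mul_of_nonneg_left hclose hsqα.le
    _ = 1 := by field_simp
  have hts : t ≤ s := by
    have hseq : s = Real.sqrt (α * ((u - v) ⬝ᵥ (Φ u).mulVec (u - v))) := by
      rw [hsdef, hrdef, matNorm, ← Real.sqrt_mul hα0.le]
    rw [htdef, matNorm, hseq]
    apply Real.sqrt_le_sqrt
    rw [hqΦ]
    have h1 : α * (α⁻¹ * ((u - v) ⬝ᵥ (H u).mulVec (u - v))) =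
        (u - v) ⬝ᵥ (H u).mulVec (u - v) := by
      field_simp
    nlinarith [hdd, hqHu (u - v), mul_nonneg hα0.le (mul_nonneg hηinv hdd)]
  have ht1 : t ≤ 1 := hts.trans hs1
  obtain ⟨hlo, hhi⟩ := hsc u hu v hv ht1
  -- quadratic form bounds from self-concordance
  have hloq : ∀ x : Fin d → ℝ,
      (1 - t) ^ 2 * (x ⬝ᵥ (H v).mulVec x) ≤ x ⬝ᵥ (H u).mulVec x := by
    intro x
    have := hlo.dotProduct_mulVec_nonneg x
    simp only [Matrix.sub_mulVec, Matrix.smul_mulVec, dotProduct_sub,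
      dotProduct_smul, smul_eq_mul, star_trivial] at this
    linarith
  have hhiq : ∀ x : Fin d → ℝ,
      x ⬝ᵥ (H u).mulVec x ≤ (1 + t) ^ 2 * (x ⬝ᵥ (H v).mulVec x) := by
    intro x
    have := hhi.dotProduct_mulVec_nonneg x
    simp only [Matrix.sub_mulVec, Matrix.smul_mulVec, dotProduct_sub,
      dotProduct_smul, smul_eq_mul, star_trivial] at this
    linarith
  -- hermitian facts
  have hHermHu : (H u).IsHermitian := (hPD u hu).isHermitian
  have hHermHv : (H v).IsHermitian := (hPD v hv).isHermitian
  have hHermΦ : ∀ w ∈ K, (Φ w).IsHermitian := by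
    intro w hw
    rw [hΦ]
    exact (hermSmul _ (hPD w hw).isHermitian).add (hermSmul _ Matrix.isHermitian_one)
  constructor
  · refine Matrix.PosSemidef.of_dotProduct_mulVec_nonneg ((hHermΦ u hu).sub (hermSmul _ (hHermΦ v hv))) ?_
    intro x
    simp only [Matrix.sub_mulVec, Matrix.smul_mulVec, dotProduct_sub,
      dotProduct_smul, smul_eq_mul, star_trivial]
    rw [hqΦ, hqΦ]
    have h1 : (1 - s) ^ 2 ≤ (1 - t) ^ 2 := by nlinarith
    have h2 : (1 - s) ^ 2 ≤ 1 := by nlinarith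
    have hb := hqHv x
    have hc : 0 ≤ x ⬝ᵥ x := dotSelfNonneg x
    have h3 := hloq x
    have hx : 0 ≤ (x ⬝ᵥ x : ℝ) := hc
    nlinarith [mul_le_mul_of_nonneg_left (mul_le_mul_of_nonneg_right h1 hb) hαinv,
      mul_le_mul_of_nonneg_left h3 hαinv,
      mul_le_mul_of_nonneg_left (mul_le_mul_of_nonneg_right h2 hc) hηinv]
  · refine Matrix.PosSemidef.of_dotProduct_mulVec_nonneg ((hermSmul _ (hHermΦ v hv)).sub (hHermΦ u hu)) ?_
    intro x
    simp only [Matrix.sub_mulVec, Matrix.smul_mulVec, dotProduct_sub,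
      dotProduct_smul, smul_eq_mul, star_trivial]
    rw [hqΦ, hqΦ]
    have h1 : (1 + t) ^ 2 ≤ (1 + s) ^ 2 := by nlinarith
    have h2 : (1:ℝ) ≤ (1 + s) ^ 2 := by nlinarith
    have hb := hqHv x
    have hc : 0 ≤ x ⬝ᵥ x := dotSelfNonneg x
    have h3 := hhiq x
    nlinarith [mul_le_mul_of_nonneg_left (mul_le_mul_of_nonneg_right h1 hb) hαinv,
      mul_le_mul_of_nonneg_left h3 hαinv,
      mul_le_mul_of_nonneg_left (mul_le_mul_of_nonneg_right h2 hc) hηinv]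
end

section
/- Let A in R^{n x d}, let S_x = diag(Ax - b) be invertible, let H(x) = A^T S_x^{-2} A, and define the regularized leverage scores sigma-tilde_i = a_i^T (H(x)+I_d)^{-1} a_i / s_{x,i}^2, cross terms sigma-tilde_{i,j} = a_i^T (H(x)+I_d)^{-1} a_j/(s_{x,i} s_{x,j}), and sigma-hat_i = a_i^T (H(x)+I_d)^{-2} a_i / s_{x,i}^2. Then sigma-tilde_i = sigma-hat_i + sum_{j=1}^n sigma-tilde_{i,j}^2. -/
open Matrix

/-- Regularized leverage score identity: with `H(x) = Aᵀ S_x⁻² A`,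
`σ̃ᵢ = aᵢᵀ(H+I)⁻¹aᵢ/s_i²`, `σ̃ᵢⱼ = aᵢᵀ(H+I)⁻¹aⱼ/(s_i s_j)`,
`σ̂ᵢ = aᵢᵀ(H+I)⁻²aᵢ/s_i²`, we have `σ̃ᵢ = σ̂ᵢ + ∑ⱼ σ̃ᵢⱼ²`. -/
theorem regularized_leverage_identity {n d : ℕ}
    (A : Matrix (Fin n) (Fin d) ℝ) (x : Fin d → ℝ) (b : Fin n → ℝ)
    (s : Fin n → ℝ) (hs : s = A.mulVec x - b) (hs0 : ∀ i, s i ≠ 0)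
    (H : Matrix (Fin d) (Fin d) ℝ)
    (hH : H = Aᵀ * Matrix.diagonal (fun i => ((s i) ^ 2)⁻¹) * A) :
    ∀ i : Fin n,
      (A i) ⬝ᵥ ((H + 1)⁻¹.mulVec (A i)) / (s i) ^ 2
        = (A i) ⬝ᵥ (((H + 1)⁻¹ * (H + 1)⁻¹).mulVec (A i)) / (s i) ^ 2
          + ∑ j : Fin n, ((A i) ⬝ᵥ ((H + 1)⁻¹.mulVec (A j)) / (s i * s j)) ^ 2 := by
  intro i
  set D : Matrix (Fin n) (Fin n) ℝ := Matrix.diagonal (fun i => ((s i) ^ 2)⁻¹) with hD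
  have hDpsd : D.PosSemidef := by
    refine Matrix.PosSemidef.diagonal ?_
    intro j
    positivity
  have hHpsd : H.PosSemidef := by
    rw [hH]
    have := hDpsd.conjTranspose_mul_mul_same A
    simpa [Matrix.conjTranspose_eq_transpose_of_trivial] using this
  have hMpd : (H + 1).PosDef := Matrix.PosDef.posSemidef_add hHpsd Matrix.PosDef.one
  set M : Matrix (Fin d) (Fin d) ℝ := H + 1 with hM
  have hdet : IsUnit M.det := (Matrix.isUnit_iff_isUnit_det M).mp hMpd.isUnit
  have hMinvsym : M⁻¹ᵀ = M⁻¹ := by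
    rw [Matrix.transpose_nonsing_inv]
    congr 1
    have := hMpd.isHermitian
    simpa [Matrix.IsHermitian, Matrix.conjTranspose_eq_transpose_of_trivial] using this
  -- key identity
  have key : M⁻¹ = M⁻¹ * M⁻¹ + M⁻¹ * H * M⁻¹ := by
    calc M⁻¹ = M⁻¹ * M * M⁻¹ := by
          rw [Matrix.nonsing_inv_mul M hdet, Matrix.one_mul]
      _ = M⁻¹ * (1 + H) * M⁻¹ := by rw [hM, add_comm]
      _ = M⁻¹ * M⁻¹ + M⁻¹ * H * M⁻¹ := by
          rw [Matrix.mul_add, Matrix.mul_one, Matrix.add_mul]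
  set u : Fin d → ℝ := M⁻¹.mulVec (A i) with hu
  have hvec : ∀ j, A j ⬝ᵥ u = A i ⬝ᵥ M⁻¹.mulVec (A j) := by
    intro j
    rw [hu, Matrix.dotProduct_mulVec, ← Matrix.mulVec_transpose, hMinvsym,
      dotProduct_comm]
  have hmid : A i ⬝ᵥ (M⁻¹ * H * M⁻¹).mulVec (A i)
      = ∑ j : Fin n, ((s j) ^ 2)⁻¹ * (A i ⬝ᵥ M⁻¹.mulVec (A j)) ^ 2 := by
    have h1 : (M⁻¹ * H * M⁻¹).mulVec (A i) = M⁻¹.mulVec (H.mulVec u) := by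
      rw [← Matrix.mulVec_mulVec, ← Matrix.mulVec_mulVec]
    rw [h1, Matrix.dotProduct_mulVec, ← Matrix.mulVec_transpose, hMinvsym, ← hu]
    rw [hH]
    have h2 : (Aᵀ * D * A).mulVec u = Aᵀ.mulVec (D.mulVec (A.mulVec u)) := by
      rw [← Matrix.mulVec_mulVec, ← Matrix.mulVec_mulVec]
    rw [h2, Matrix.dotProduct_mulVec, ← Matrix.mulVec_transpose, Matrix.transpose_transpose]
    simp only [dotProduct, hD, Matrix.mulVec_diagonal]
    refine Finset.sum_congr rfl fun j _ => ?_
    have h3 : (A *ᵥ u) j = A i ⬝ᵥ M⁻¹ *ᵥ A j := hvec j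
    rw [h3]; simp only [dotProduct]; ring
  calc A i ⬝ᵥ M⁻¹.mulVec (A i) / (s i) ^ 2
      = (A i ⬝ᵥ (M⁻¹ * M⁻¹).mulVec (A i)
          + A i ⬝ᵥ (M⁻¹ * H * M⁻¹).mulVec (A i)) / (s i) ^ 2 := by
        rw [show M⁻¹.mulVec (A i) = (M⁻¹ * M⁻¹ + M⁻¹ * H * M⁻¹).mulVec (A i) by rw [← key],
          Matrix.add_mulVec, dotProduct_add]
    _ = A i ⬝ᵥ (M⁻¹ * M⁻¹).mulVec (A i) / (s i) ^ 2
          + ∑ j : Fin n, (A i ⬝ᵥ M⁻¹.mulVec (A j) / (s i * s j)) ^ 2 := by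
        rw [hmid, add_div]
        congr 1
        rw [Finset.sum_div]
        refine Finset.sum_congr rfl fun j _ => ?_
        have hsi := hs0 i
        have hsj := hs0 j
        set c := A i ⬝ᵥ M⁻¹ *ᵥ A j with hc
        rw [div_pow, mul_pow]
        field_simp
end

section
/- Let K be a spectrahedron {x : sum_i x_i A_i >= C} with A_i, C symmetric n x n, and H_log(x) = A-sf (S(x)^{-1} ⊗ S(x)^{-1}) A-sf^T the Hessian of the log barrier -log det S(x). Then H_log is n-symmetric: for every x in the interior of K, E_x(1) ⊆ K ∩ (2x - K) ⊆ E_x(sqrt(n)), where E_x(r) = {y : (y-x)^T H_log(x) (y-x) <= r^2}. -/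
open Matrix Kronecker

variable {n : ℕ}

open scoped MatrixOrder in
noncomputable def Matrix.PosSemidef.sqrt {M : Matrix (Fin n) (Fin n) ℝ} (_hM : M.PosSemidef) :
    Matrix (Fin n) (Fin n) ℝ := CFC.sqrt M

open scoped MatrixOrder in
lemma Matrix.PosSemidef.posSemidef_sqrt {M : Matrix (Fin n) (Fin n) ℝ} (hM : M.PosSemidef) :
    hM.sqrt.PosSemidef := (CFC.sqrt_nonneg M).posSemidef

open scoped MatrixOrder in
lemma Matrix.PosSemidef.sqrt_mul_self {M : Matrix (Fin n) (Fin n) ℝ} (hM : M.PosSemidef) :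
    hM.sqrt * hM.sqrt = M := CFC.sqrt_mul_sqrt_self M hM.nonneg

lemma aux_psd_trace_nonneg {M : Matrix (Fin n) (Fin n) ℝ} (hM : M.PosSemidef) :
    0 ≤ M.trace := by
  rw [Matrix.trace]
  refine Finset.sum_nonneg fun i _ => ?_
  simpa [single_dotProduct, Matrix.mulVec_single, Matrix.diag] using
    hM.dotProduct_mulVec_nonneg (Pi.single i 1)

lemma aux_psd_trace_mul_nonneg {A B : Matrix (Fin n) (Fin n) ℝ}
    (hA : A.PosSemidef) (hB : B.PosSemidef) : 0 ≤ (A * B).trace := by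
  have h2 : (hA.sqrt * B * hA.sqrt).PosSemidef := by
    have := hB.mul_mul_conjTranspose_same hA.sqrt
    rwa [hA.posSemidef_sqrt.isHermitian.eq] at this
  calc (0:ℝ) ≤ (hA.sqrt * B * hA.sqrt).trace := aux_psd_trace_nonneg h2
  _ = (A * B).trace := by
      rw [Matrix.trace_mul_cycle, hA.sqrt_mul_self]

lemma aux_abs_quadform_le {M : Matrix (Fin n) (Fin n) ℝ}
    (_hM : Mᵀ = M) (h1 : ∑ a, ∑ b, M a b ^ 2 ≤ 1) (w : Fin n → ℝ) :
    |w ⬝ᵥ M *ᵥ w| ≤ w ⬝ᵥ w := by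
  have hQ : w ⬝ᵥ M *ᵥ w = ∑ p : Fin n × Fin n, M p.1 p.2 * (w p.1 * w p.2) := by
    rw [Fintype.sum_prod_type]
    simp only [dotProduct, Matrix.mulVec, dotProduct, Finset.mul_sum]
    exact Finset.sum_congr rfl fun a _ => Finset.sum_congr rfl fun b _ => by ring
  have hww : w ⬝ᵥ w = ∑ a, w a ^ 2 := by
    simp [dotProduct, sq]
  have hww0 : 0 ≤ w ⬝ᵥ w := by
    rw [hww]; exact Finset.sum_nonneg fun a _ => sq_nonneg _
  have hcs := Finset.sum_mul_sq_le_sq_mul_sq Finset.univ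
    (fun p : Fin n × Fin n => M p.1 p.2) (fun p : Fin n × Fin n => w p.1 * w p.2)
  have hM1 : ∑ p : Fin n × Fin n, M p.1 p.2 ^ 2 ≤ 1 := by
    rw [Fintype.sum_prod_type]; exact h1
  have hw2 : ∑ p : Fin n × Fin n, (w p.1 * w p.2) ^ 2 = (w ⬝ᵥ w) ^ 2 := by
    rw [Fintype.sum_prod_type, hww, sq (∑ a, w a ^ 2), Finset.sum_mul_sum]
    simp [mul_pow]
  rw [abs_le, hQ]
  constructor <;> nlinarith [hcs, hw2, hM1, hww0,
    sq_nonneg (∑ p : Fin n × Fin n, (w p.1 * w p.2) ^ 2)]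

lemma aux_quad {n d : ℕ} (A : Fin d → Matrix (Fin n) (Fin n) ℝ)
    (𝒜 : Matrix (Fin d) (Fin n × Fin n) ℝ) (h𝒜 : ∀ i p, 𝒜 i p = A i p.1 p.2)
    (P : Matrix (Fin n) (Fin n) ℝ) (hP : Pᵀ = P) (Δ : Fin d → ℝ)
    (D : Matrix (Fin n) (Fin n) ℝ) (hD : D = ∑ i, Δ i • A i) (hDs : Dᵀ = D) :
    Δ ⬝ᵥ (𝒜 * (P ⊗ₖ P) * 𝒜ᵀ) *ᵥ Δ = Matrix.trace (D * (P * D * P)) := by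
  have hPp : ∀ a b, P b a = P a b := fun a b => (congrFun (congrFun hP.symm b) a).trans rfl
  have hDp : ∀ a b, D b a = D a b := fun a b => (congrFun (congrFun hDs.symm b) a).trans rfl
  have hw : 𝒜ᵀ *ᵥ Δ = fun p : Fin n × Fin n => D p.1 p.2 := by
    funext p
    simp [Matrix.mulVec, dotProduct, h𝒜, hD, Matrix.sum_apply, mul_comm]
  rw [← Matrix.mulVec_mulVec, ← Matrix.mulVec_mulVec, Matrix.dotProduct_mulVec Δ 𝒜,
    ← Matrix.mulVec_transpose, hw]
  simp only [dotProduct, Matrix.mulVec, Matrix.trace, Matrix.diag, Matrix.mul_apply,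
    Matrix.kroneckerMap_apply, Fintype.sum_prod_type, Finset.sum_mul, Finset.mul_sum]
  refine Finset.sum_congr rfl fun a _ => Finset.sum_congr rfl fun b _ =>
    Finset.sum_congr rfl fun c _ => Finset.sum_congr rfl fun e _ => ?_
  rw [hPp c a, hDp e c]
  ring

/-- n-symmetry of the spectrahedron log-barrier Hessian: for `x` in the interior of
`K = {z : ∑ᵢ zᵢ Aᵢ ⪰ C}`, with `H_log(x) = 𝒜 (S(x)⁻¹ ⊗ S(x)⁻¹) 𝒜ᵀ`,
`E_x(1) ⊆ K ∩ (2x - K) ⊆ E_x(√n)` where `E_x(r) = {y : (y-x)ᵀ H_log(x) (y-x) ≤ r²}`. -/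
theorem spectrahedron_logbarrier_n_symmetry {n d : ℕ}
    (A : Fin d → Matrix (Fin n) (Fin n) ℝ) (hA : ∀ i, (A i).IsSymm)
    (C : Matrix (Fin n) (Fin n) ℝ) (hC : C.IsSymm)
    (𝒜 : Matrix (Fin d) (Fin n × Fin n) ℝ)
    (h𝒜 : ∀ i p, 𝒜 i p = A i p.1 p.2)
    (x : Fin d → ℝ) (hx : (∑ i, x i • A i - C).PosDef)
    (K : Set (Fin d → ℝ)) (hK : K = {z | (∑ i, z i • A i - C).PosSemidef}) :
    letI S : Matrix (Fin n) (Fin n) ℝ := ∑ i, x i • A i - C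
    letI Hlog : Matrix (Fin d) (Fin d) ℝ := 𝒜 * (S⁻¹ ⊗ₖ S⁻¹) * 𝒜ᵀ
    letI E : ℝ → Set (Fin d → ℝ) :=
      fun r => {y | (y - x) ⬝ᵥ Hlog.mulVec (y - x) ≤ r ^ 2}
    E 1 ⊆ K ∩ {z | ∃ u ∈ K, z = (2 : ℝ) • x - u} ∧
    K ∩ {z | ∃ u ∈ K, z = (2 : ℝ) • x - u} ⊆ E (Real.sqrt n) := by
  have hAs : ∀ i, (A i)ᵀ = A i := hA
  set S : Matrix (Fin n) (Fin n) ℝ := ∑ i, x i • A i - C with hSdef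
  have hSs : Sᵀ = S := by
    rw [hSdef, Matrix.transpose_sub, Matrix.transpose_sum, hC]
    congr 1
    exact Finset.sum_congr rfl fun i _ => by rw [Matrix.transpose_smul, hAs]
  set R := hx.posSemidef.sqrt with hRdef
  have hRpsd : R.PosSemidef := hx.posSemidef.posSemidef_sqrt
  have hRs : Rᵀ = R := (Matrix.conjTranspose_eq_transpose_of_trivial R).symm.trans hRpsd.1
  have hRR : R * R = S := hx.posSemidef.sqrt_mul_self
  have hdet : IsUnit R.det := by
    have hds : R.det * R.det = S.det := by rw [← Matrix.det_mul, hRR]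
    have h0 : S.det ≠ 0 := hx.det_pos.ne'
    exact isUnit_iff_ne_zero.2 fun h => h0 (by rw [← hds, h, mul_zero])
  have hRRi : R * R⁻¹ = 1 := Matrix.mul_nonsing_inv R hdet
  have hRiR : R⁻¹ * R = 1 := Matrix.nonsing_inv_mul R hdet
  set Ri := R⁻¹ with hRidef
  have hRis : Riᵀ = Ri := by rw [hRidef, Matrix.transpose_nonsing_inv, hRs]
  have hRiH : Riᴴ = Ri := (Matrix.conjTranspose_eq_transpose_of_trivial Ri).trans hRis
  have hSinv : S⁻¹ = Ri * Ri := by rw [← hRR, Matrix.mul_inv_rev]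
  have hSis : (S⁻¹)ᵀ = S⁻¹ := by rw [hSinv, Matrix.transpose_mul, hRis]
  -- D and M
  have hDs : ∀ y : Fin d → ℝ, (∑ i, (y i - x i) • A i)ᵀ = ∑ i, (y i - x i) • A i := by
    intro y
    rw [Matrix.transpose_sum]
    exact Finset.sum_congr rfl fun i _ => by rw [Matrix.transpose_smul, hAs]
  have hplus : ∀ y : Fin d → ℝ, ∑ i, y i • A i - C = S + ∑ i, (y i - x i) • A i := by
    intro y
    rw [hSdef, sub_add_eq_add_sub, ← Finset.sum_add_distrib]
    congr 1
    refine Finset.sum_congr rfl fun i _ => ?_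
    rw [sub_smul]; abel
  have hminus : ∀ y : Fin d → ℝ,
      ∑ i, ((2:ℝ) • x - y) i • A i - C = S - ∑ i, (y i - x i) • A i := by
    intro y
    rw [hSdef, sub_right_comm, ← Finset.sum_sub_distrib]
    congr 1
    refine Finset.sum_congr rfl fun i _ => ?_
    rw [← sub_smul]
    congr 1
    simp only [Pi.sub_apply, Pi.smul_apply, smul_eq_mul]
    ring
  have hMs : ∀ y : Fin d → ℝ,
      (Ri * (∑ i, (y i - x i) • A i) * Ri)ᵀ = Ri * (∑ i, (y i - x i) • A i) * Ri := by
    intro y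
    rw [Matrix.transpose_mul, Matrix.transpose_mul, hRis, hDs y, ← Matrix.mul_assoc]
  have hQ : ∀ y : Fin d → ℝ,
      (y - x) ⬝ᵥ (𝒜 * (S⁻¹ ⊗ₖ S⁻¹) * 𝒜ᵀ) *ᵥ (y - x)
        = Matrix.trace ((Ri * (∑ i, (y i - x i) • A i) * Ri)
            * (Ri * (∑ i, (y i - x i) • A i) * Ri)) := by
    intro y
    rw [aux_quad A 𝒜 h𝒜 S⁻¹ hSis (y - x) (∑ i, (y i - x i) • A i) rfl (hDs y)]
    set D := ∑ i, (y i - x i) • A i with hD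
    have h1 : D * (S⁻¹ * D * S⁻¹) = (D * Ri) * ((Ri * D * Ri) * Ri) := by
      rw [hSinv]; simp only [Matrix.mul_assoc]
    have h2 : ((Ri * D * Ri) * Ri) * (D * Ri) = (Ri * D * Ri) * (Ri * D * Ri) := by
      simp only [Matrix.mul_assoc]
    rw [h1, Matrix.trace_mul_comm, h2]
  have htr : ∀ (M : Matrix (Fin n) (Fin n) ℝ), Mᵀ = M →
      Matrix.trace (M * M) = ∑ a, ∑ b, M a b ^ 2 := by
    intro M hM
    have hMp : ∀ a b, M b a = M a b := fun a b => (congrFun (congrFun hM.symm b) a).trans rfl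
    simp only [Matrix.trace, Matrix.diag, Matrix.mul_apply]
    exact Finset.sum_congr rfl fun a _ => Finset.sum_congr rfl fun b _ => by
      rw [hMp a b]; ring
  have hRMR : ∀ y : Fin d → ℝ,
      R * (Ri * (∑ i, (y i - x i) • A i) * Ri) * R = ∑ i, (y i - x i) • A i := by
    intro y
    simp only [Matrix.mul_assoc]
    rw [hRiR, Matrix.mul_one, ← Matrix.mul_assoc, hRRi, Matrix.one_mul]
  constructor
  · -- E 1 ⊆ K ∩ (2x - K)
    rintro y hy
    set D := ∑ i, (y i - x i) • A i with hD
    set M := Ri * D * Ri with hM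
    have hMsy : Mᵀ = M := hMs y
    have hyQ : ∑ a, ∑ b, M a b ^ 2 ≤ 1 := by
      have h := hy
      simp only [Set.mem_setOf_eq] at h
      rw [hQ y, htr M hMsy] at h
      simpa using h
    have hwS : ∀ v : Fin n → ℝ, v ⬝ᵥ S *ᵥ v = (R *ᵥ v) ⬝ᵥ (R *ᵥ v) := by
      intro v
      rw [← hRR, ← Matrix.mulVec_mulVec, Matrix.dotProduct_mulVec, ← Matrix.mulVec_transpose, hRs]
    have hRMR' : R * M * R = D := by rw [hM, hD]; exact hRMR y
    have hwD : ∀ v : Fin n → ℝ, v ⬝ᵥ D *ᵥ v = (R *ᵥ v) ⬝ᵥ M *ᵥ (R *ᵥ v) := by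
      intro v
      rw [← hRMR', ← Matrix.mulVec_mulVec, ← Matrix.mulVec_mulVec,
        Matrix.dotProduct_mulVec, ← Matrix.mulVec_transpose, hRs]
    have hbound : ∀ v : Fin n → ℝ, |v ⬝ᵥ D *ᵥ v| ≤ v ⬝ᵥ S *ᵥ v := by
      intro v
      rw [hwD v, hwS v]
      exact aux_abs_quadform_le hMsy hyQ (R *ᵥ v)
    have hplusPSD : (S + D).PosSemidef := by
      refine Matrix.PosSemidef.of_dotProduct_mulVec_nonneg ?_ fun v => ?_
      · show (S + D)ᴴ = S + D
        rw [Matrix.conjTranspose_eq_transpose_of_trivial, Matrix.transpose_add, hSs, hDs y]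
      · have hsv : star v = v := by funext i; simp
        rw [hsv, Matrix.add_mulVec, dotProduct_add]
        have := abs_le.1 (hbound v)
        linarith [this.1, this.2]
    have hminusPSD : (S - D).PosSemidef := by
      refine Matrix.PosSemidef.of_dotProduct_mulVec_nonneg ?_ fun v => ?_
      · show (S - D)ᴴ = S - D
        rw [Matrix.conjTranspose_eq_transpose_of_trivial, Matrix.transpose_sub, hSs, hDs y]
      · have hsv : star v = v := by funext i; simp
        rw [hsv, Matrix.sub_mulVec, dotProduct_sub]
        have := abs_le.1 (hbound v)
        linarith [this.1, this.2]
    refine ⟨?_, ⟨(2:ℝ) • x - y, ?_, ?_⟩⟩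
    · rw [hK]
      show (∑ i, y i • A i - C).PosSemidef
      rw [hplus y]; exact hplusPSD
    · rw [hK]
      show (∑ i, ((2:ℝ) • x - y) i • A i - C).PosSemidef
      rw [hminus y]; exact hminusPSD
    · exact (sub_sub_cancel _ _).symm
  · -- K ∩ (2x - K) ⊆ E (√n)
    rintro y ⟨hyK, u, huK, hyu⟩
    rw [hK] at hyK huK
    set D := ∑ i, (y i - x i) • A i with hD
    set M := Ri * D * Ri with hM
    have hMsy : Mᵀ = M := hMs y
    have h1 : (S + D).PosSemidef := by
      have := hyK
      rw [Set.mem_setOf_eq, hplus y] at this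
      exact this
    have hu2 : u = (2:ℝ) • x - y := by rw [hyu, sub_sub_cancel]
    have h2 : (S - D).PosSemidef := by
      have := huK
      rw [Set.mem_setOf_eq, hu2, hminus y] at this
      exact this
    have hRiSRi : Ri * S * Ri = 1 := by
      rw [← hRR, ← Matrix.mul_assoc Ri R R, hRiR, Matrix.one_mul, hRRi]
    have hMp : (1 + M).PosSemidef := by
      have h := h1.mul_mul_conjTranspose_same Ri
      rw [hRiH] at h
      have heq : Ri * (S + D) * Ri = 1 + M := by
        rw [Matrix.mul_add, Matrix.add_mul, hRiSRi, hM]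
      rwa [heq] at h
    have hMm : (1 - M).PosSemidef := by
      have h := h2.mul_mul_conjTranspose_same Ri
      rw [hRiH] at h
      have heq : Ri * (S - D) * Ri = 1 - M := by
        rw [Matrix.mul_sub, Matrix.sub_mul, hRiSRi, hM]
      rwa [heq] at h
    have hprod : (1 - M) * (1 + M) = 1 - M * M := by noncomm_ring
    have htn := aux_psd_trace_mul_nonneg hMm hMp
    rw [hprod] at htn
    have htr1 : Matrix.trace ((1 : Matrix (Fin n) (Fin n) ℝ) - M * M)
        = (n : ℝ) - Matrix.trace (M * M) := by
      rw [Matrix.trace_sub, Matrix.trace_one, Fintype.card_fin]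
    rw [htr1] at htn
    show (y - x) ⬝ᵥ (𝒜 * (S⁻¹ ⊗ₖ S⁻¹) * 𝒜ᵀ) *ᵥ (y - x) ≤ Real.sqrt n ^ 2
    rw [hQ y, Real.sq_sqrt (by positivity : (0:ℝ) ≤ (n:ℝ))]
    rw [← hM]
    linarith
end

section
/- Let P be a symmetric positive semidefinite n^2 x n^2 matrix with P <= P-bar for an orthogonal projection P-bar, and let B-bar be symmetric n x n. Then trace[P (B-bar ⊗_S I)(P)(B-bar ⊗_S I)] <= (1/2) trace[P ((B-bar^2 ⊗_S I) + (B-bar ⊗ B-bar))], where B-bar ⊗_S I = (1/2)(B-bar ⊗ I + I ⊗ B-bar); consequently the quantity T(xi) = <P, (B-bar ⊗_S I) P (B-bar ⊗_S I)> is at most (Q(xi) + R(xi))/2 with Q(xi) = <P, B-bar^2 ⊗_S I> and R(xi) = <P, B-bar ⊗ B-bar>. -/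
open Matrix Kronecker

private lemma trace_transpose_mul_self_nonneg {m : Type*} [Fintype m]
    (M : Matrix m m ℝ) : 0 ≤ (Mᵀ * M).trace := by
  rw [Matrix.trace]
  refine Finset.sum_nonneg fun i _ => ?_
  rw [Matrix.diag_apply, Matrix.mul_apply]
  exact Finset.sum_nonneg fun j _ => by simp [mul_self_nonneg]

private lemma trace_mul_nonneg_aux {m : Type*} [Fintype m] [DecidableEq m]
    (S T : Matrix m m ℝ) (hS : Sᵀ = S) (hT : Tᵀ = T) :
    0 ≤ (S * S * (T * T)).trace := by
  have key : (S * S * (T * T)).trace = ((T * S)ᵀ * (T * S)).trace := by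
    rw [Matrix.transpose_mul, hS, hT]
    rw [show S * S * (T * T) = S * (S * T * T) by simp [Matrix.mul_assoc]]
    rw [Matrix.trace_mul_comm, show S * T * T * S = S * T * (T * S) by simp [Matrix.mul_assoc],
      Matrix.trace_mul_comm]
  rw [key]
  exact trace_transpose_mul_self_nonneg _

open scoped MatrixOrder in
private lemma trace_mul_nonneg {m : Type*} [Fintype m] [DecidableEq m]
    {A D : Matrix m m ℝ} (hA : A.PosSemidef) (hD : D.PosSemidef) :
    0 ≤ (A * D).trace := by
  have hsa : (CFC.sqrt A)ᵀ = CFC.sqrt A := by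
    have := (CFC.sqrt_nonneg A).posSemidef.isHermitian
    rwa [Matrix.IsHermitian, Matrix.conjTranspose_eq_transpose_of_trivial] at this
  have hsd : (CFC.sqrt D)ᵀ = CFC.sqrt D := by
    have := (CFC.sqrt_nonneg D).posSemidef.isHermitian
    rwa [Matrix.IsHermitian, Matrix.conjTranspose_eq_transpose_of_trivial] at this
  have := trace_mul_nonneg_aux (CFC.sqrt A) (CFC.sqrt D) hsa hsd
  rwa [CFC.sqrt_mul_sqrt_self A hA.nonneg, CFC.sqrt_mul_sqrt_self D hD.nonneg] at this

/-- Trace inequality for matrices dominated by a projection: if `0 ⪯ P ⪯ P̄` with `P̄`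
an orthogonal projection and `B̄` symmetric, then with `B̄ ⊗_S I = (1/2)(B̄⊗I + I⊗B̄)`,
`tr[P (B̄⊗_S I) P (B̄⊗_S I)] ≤ (1/2) tr[P ((B̄²⊗_S I) + (B̄⊗B̄))]`. -/
theorem trace_projection_inequality {n : ℕ}
    (P Pbar : Matrix (Fin n × Fin n) (Fin n × Fin n) ℝ)
    (hP : P.PosSemidef) (hPbar1 : Pbar.IsSymm) (hPbar2 : Pbar * Pbar = Pbar)
    (hle : (Pbar - P).PosSemidef)
    (B : Matrix (Fin n) (Fin n) ℝ) (hB : B.IsSymm) :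
    letI BS : Matrix (Fin n × Fin n) (Fin n × Fin n) ℝ :=
      (1 / 2 : ℝ) • (B ⊗ₖ (1 : Matrix (Fin n) (Fin n) ℝ)
        + (1 : Matrix (Fin n) (Fin n) ℝ) ⊗ₖ B)
    (P * BS * P * BS).trace ≤
      (1 / 2 : ℝ) * (P * ((1 / 2 : ℝ) • ((B * B) ⊗ₖ (1 : Matrix (Fin n) (Fin n) ℝ)
          + (1 : Matrix (Fin n) (Fin n) ℝ) ⊗ₖ (B * B)) + B ⊗ₖ B)).trace := by
  set BS : Matrix (Fin n × Fin n) (Fin n × Fin n) ℝ :=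
    (1 / 2 : ℝ) • (B ⊗ₖ (1 : Matrix (Fin n) (Fin n) ℝ)
      + (1 : Matrix (Fin n) (Fin n) ℝ) ⊗ₖ B) with hBSdef
  -- BS is symmetric (conjTranspose = itself)
  have hBconj : Bᴴ = B := by
    rw [Matrix.conjTranspose_eq_transpose_of_trivial]; exact hB
  have hBSconj : BSᴴ = BS := by
    simp only [hBSdef, Matrix.conjTranspose_smul, Matrix.conjTranspose_add,
      Matrix.conjTranspose_eq_transpose_of_trivial, Matrix.transpose_smul,
      Matrix.transpose_add]
    rw [← Matrix.kroneckerMap_transpose, ← Matrix.kroneckerMap_transpose]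
    rw [show Bᵀ = B from hB, Matrix.transpose_one]
  -- Pbar is PSD and I - Pbar is PSD
  have hPbarconj : Pbarᴴ = Pbar := by
    rw [Matrix.conjTranspose_eq_transpose_of_trivial]; exact hPbar1
  have hPbarPSD : Pbar.PosSemidef := by
    have : Pbar = Pbarᴴ * Pbar := by rw [hPbarconj, hPbar2]
    rw [this]; exact Matrix.posSemidef_conjTranspose_mul_self _
  have hIPbar : ((1 : Matrix (Fin n × Fin n) (Fin n × Fin n) ℝ) - Pbar).PosSemidef := by
    have h1 : (1 - Pbar) = (1 - Pbar)ᴴ * (1 - Pbar) := by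
      rw [Matrix.conjTranspose_sub, Matrix.conjTranspose_one, hPbarconj]
      rw [Matrix.sub_mul, Matrix.mul_sub, Matrix.mul_sub, hPbar2]
      simp
    rw [h1]; exact Matrix.posSemidef_conjTranspose_mul_self _
  -- step 1 : tr(P BS P BS) ≤ tr(P BS Pbar BS)
  have hmono : ∀ X : Matrix (Fin n × Fin n) (Fin n × Fin n) ℝ, X.PosSemidef →
      0 ≤ (P * (BS * X * BS)).trace := by
    intro X hX
    refine trace_mul_nonneg hP ?_
    have := hX.mul_mul_conjTranspose_same BS
    rwa [hBSconj] at this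
  have step1 : (P * BS * P * BS).trace ≤ (P * BS * Pbar * BS).trace := by
    have h := hmono (Pbar - P) hle
    have hexp : P * (BS * (Pbar - P) * BS)
        = P * BS * Pbar * BS - P * BS * P * BS := by
      rw [Matrix.mul_sub, Matrix.sub_mul, Matrix.mul_sub]
      simp [Matrix.mul_assoc]
    rw [hexp, Matrix.trace_sub] at h
    linarith
  have step2 : (P * BS * Pbar * BS).trace ≤ (P * BS * BS).trace := by
    have h := hmono (1 - Pbar) hIPbar
    have hexp : P * (BS * (1 - Pbar) * BS)
        = P * BS * BS - P * BS * Pbar * BS := by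
      rw [Matrix.mul_sub, Matrix.sub_mul, Matrix.mul_sub, Matrix.mul_one]
      simp [Matrix.mul_assoc]
    rw [hexp, Matrix.trace_sub] at h
    linarith
  -- final : tr(P BS BS) equals the RHS
  have hBS2 : BS * BS = (1 / 2 : ℝ) • ((1 / 2 : ℝ) • ((B * B) ⊗ₖ (1 : Matrix (Fin n) (Fin n) ℝ)
      + (1 : Matrix (Fin n) (Fin n) ℝ) ⊗ₖ (B * B)) + B ⊗ₖ B) := by
    simp only [hBSdef, Matrix.smul_mul, Matrix.mul_smul, Matrix.add_mul, Matrix.mul_add,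
      ← Matrix.mul_kronecker_mul, Matrix.one_mul, Matrix.mul_one, smul_add, smul_smul]
    module
  have hfinal : (P * BS * BS).trace
      = (1 / 2 : ℝ) * (P * ((1 / 2 : ℝ) • ((B * B) ⊗ₖ (1 : Matrix (Fin n) (Fin n) ℝ)
          + (1 : Matrix (Fin n) (Fin n) ℝ) ⊗ₖ (B * B)) + B ⊗ₖ B)).trace := by
    rw [Matrix.mul_assoc, hBS2, Matrix.mul_smul, Matrix.trace_smul]
    simp
  linarith [step1, step2, hfinal.le, hfinal.ge]
end
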